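/- Let {γ_n}_{n≥0} be a CPD sequence with limsup_{n→∞} |γ_n|^{1/n} < ∞ and representing triplet (b, c, ν). Suppose supp ν ⊆ [0,∞) and γ_n ≥ 0 for all sufficiently large n. Then the following are equivalent: (i) lim_{n→∞}(γ_{n+1} − γ_n) = 0; (ii) the sequence {γ_n} is monotonically decreasing; (iii) the sequence {γ_n} converges in ℝ. Moreover, if (i) holds, then {γ_n} is PD and γ_n ≥ 0 for all n ∈ ℤ₊. -/

import Mathlib

open MeasureTheory Filter Topology
open scoped ComplexOrder

noncomputable section

/-- A real sequence `γ` is *conditionally positive definite* (CPD) if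
`∑_{i,j=0}^k γ_{i+j} λ_i conj(λ_j) ≥ 0` for all finite sequences `λ_0, …, λ_k` of complex
numbers with `∑_{i=0}^k λ_i = 0`. -/
def IsCPDSeq (γ : ℕ → ℝ) : Prop :=
  ∀ (k : ℕ) (l : ℕ → ℂ), ∑ i ∈ Finset.range (k + 1), l i = 0 →
    0 ≤ ∑ i ∈ Finset.range (k + 1), ∑ j ∈ Finset.range (k + 1),
        (γ (i + j) : ℂ) * l i * (starRingEnd ℂ) (l j)

/-- A real sequence `γ` is *positive definite* (PD) if
`∑_{i,j=0}^k γ_{i+j} λ_i conj(λ_j) ≥ 0` for all finite sequences `λ_0, …, λ_k ∈ ℂ`. -/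
def IsPDSeq (γ : ℕ → ℝ) : Prop :=
  ∀ (k : ℕ) (l : ℕ → ℂ),
    0 ≤ ∑ i ∈ Finset.range (k + 1), ∑ j ∈ Finset.range (k + 1),
        (γ (i + j) : ℂ) * l i * (starRingEnd ℂ) (l j)

/-- The polynomial `Q_n`: `Q_n(x) = 0` for `n = 0, 1` and
`Q_n(x) = ∑_{j=0}^{n-2} (n - j - 1) x^j` for `n ≥ 2`. -/
def Qpoly (n : ℕ) (x : ℝ) : ℝ :=
  ∑ j ∈ Finset.range (n - 1), ((n : ℝ) - (j : ℝ) - 1) * x ^ j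

/-- `(b, c, ν)` is a representing triplet of the sequence `γ`: `b ∈ ℝ`, `c ≥ 0`, `ν` a finite
compactly supported Borel measure on `ℝ` with `ν({1}) = 0`, and
`γ_n = γ_0 + b n + c n² + ∫ Q_n dν` for all `n`. -/
def IsRepTriplet (γ : ℕ → ℝ) (b c : ℝ) (ν : Measure ℝ) : Prop :=
  0 ≤ c ∧ IsFiniteMeasure ν ∧ (∃ K : Set ℝ, IsCompact K ∧ ν Kᶜ = 0) ∧
    ν ({1} : Set ℝ) = 0 ∧
    ∀ n : ℕ, γ n = γ 0 + b * n + c * (n : ℝ) ^ 2 + ∫ x, Qpoly n x ∂ν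

/-- The sequence `n ↦ |γ_n|^{1/n}`. -/
def rootSeq (γ : ℕ → ℝ) : ℕ → ℝ := fun n => |γ n| ^ ((1 : ℝ) / n)

/-- `limsup_{n → ∞} |γ_n|^{1/n} < ∞`, i.e. the sequence `|γ_n|^{1/n}` is (eventually)
bounded above. -/
def FiniteExpGrowth (γ : ℕ → ℝ) : Prop :=
  IsBoundedUnder (· ≤ ·) atTop (rootSeq γ)

/-- `limsup_{n → ∞} |γ_n|^{1/n}` (as a real number). -/
def limsupRoot (γ : ℕ → ℝ) : ℝ := limsup (rootSeq γ) atTop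

/-- The closed support of a Borel measure on `ℝ`: the set of points all of whose open
neighbourhoods have nonzero measure. -/
def measSupport (ν : Measure ℝ) : Set ℝ :=
  {x : ℝ | ∀ U : Set ℝ, IsOpen U → x ∈ U → ν U ≠ 0}

/-- The difference transformation `Δ`, `(Δγ)_n = γ_{n+1} - γ_n`. -/
def deltaSeq (γ : ℕ → ℝ) : ℕ → ℝ := fun n => γ (n + 1) - γ n

namespace CPDAux

/-! ### Auxiliary algebraic lemmas -/

def geom (n : ℕ) (x : ℝ) : ℝ := ∑ j ∈ Finset.range n, x ^ j

lemma Qpoly_eq (n : ℕ) (x : ℝ) :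
    Qpoly n x = ∑ j ∈ Finset.range n, ((n : ℝ) - (j : ℝ) - 1) * x ^ j := by
  rcases n with _ | m
  · simp [Qpoly]
  · have h0 : (((m+1 : ℕ) : ℝ) - ((m : ℕ) : ℝ) - 1) * x ^ m = 0 := by push_cast; ring
    rw [Qpoly, Nat.succ_sub_one, Finset.sum_range_succ, h0, add_zero]

lemma Qpoly_succ_sub (n : ℕ) (x : ℝ) : Qpoly (n+1) x - Qpoly n x = geom n x := by
  rw [Qpoly_eq, Qpoly_eq, geom, Finset.sum_range_succ]
  have h0 : (((n+1:ℕ):ℝ) - ((n:ℕ):ℝ) - 1) * x ^ n = 0 := by push_cast; ring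
  rw [h0, add_zero, ← Finset.sum_sub_distrib]
  refine Finset.sum_congr rfl fun j hj => ?_
  push_cast
  ring

lemma geom_succ_sub (n : ℕ) (x : ℝ) : geom (n+1) x - geom n x = x ^ n := by
  rw [geom, geom, Finset.sum_range_succ]; ring

lemma geom_nonneg {x : ℝ} (hx : 0 ≤ x) (n : ℕ) : 0 ≤ geom n x :=
  Finset.sum_nonneg fun j _ => pow_nonneg hx j

lemma continuous_geom (n : ℕ) : Continuous (geom n) :=
  continuous_finset_sum _ fun j _ => continuous_pow j

lemma continuous_Qpoly (n : ℕ) : Continuous (Qpoly n) :=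
  continuous_finset_sum _ fun j _ => continuous_const.mul (continuous_pow j)

/-! ### Measure-theoretic auxiliary lemmas -/

lemma ae_nonneg_of_support {ν : Measure ℝ} (hsupp : measSupport ν ⊆ Set.Ici 0) :
    ∀ᵐ x ∂ν, 0 ≤ x := by
  have h : ∀ x : Set.Iio (0:ℝ), ∃ U : Set ℝ, IsOpen U ∧ (x:ℝ) ∈ U ∧ ν U = 0 := by
    rintro ⟨x, hx⟩
    by_contra h
    push_neg at h
    have hxs : x ∈ measSupport ν := fun U hU hxU => h U hU hxU
    exact absurd (Set.mem_Ici.1 (hsupp hxs)) (not_le.2 hx)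
  choose U hUo hxU hU0 using h
  obtain ⟨T, hTc, hTU⟩ := TopologicalSpace.isOpen_iUnion_countable U hUo
  have hnull : ν (⋃ i ∈ T, U i) = 0 := by
    apply (measure_biUnion_null_iff hTc).2
    intro i _
    exact hU0 i
  rw [hTU] at hnull
  have hsub : Set.Iio (0:ℝ) ⊆ ⋃ i, U i := by
    intro x hx
    exact Set.mem_iUnion.2 ⟨⟨x, hx⟩, hxU ⟨x, hx⟩⟩
  have h0 : ν (Set.Iio (0:ℝ)) = 0 := measure_mono_null hsub hnull
  rw [ae_iff]
  convert h0 using 2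
  ext x
  simp [not_le]

lemma ae_mem_of_null_compl {ν : Measure ℝ} {K : Set ℝ} (hK0 : ν Kᶜ = 0) :
    ∀ᵐ x ∂ν, x ∈ K := by
  rw [ae_iff]
  convert hK0 using 2
  rfl

lemma integrable_of_cont {ν : Measure ℝ} [IsFiniteMeasure ν] {K : Set ℝ} (hK : IsCompact K)
    (hK0 : ν Kᶜ = 0) {f : ℝ → ℝ} (hf : Continuous f) : Integrable f ν := by
  obtain ⟨C, hC⟩ := hK.exists_bound_of_continuousOn hf.continuousOn
  refine (integrable_const C).mono' hf.aestronglyMeasurable ?_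
  filter_upwards [ae_mem_of_null_compl hK0] with x hx using hC x hx

/-! ### Reindexing lemmas for `tsum` in `ℝ≥0∞` -/

lemma tsum_shift (g : ℕ → ENNReal) (m : ℕ) :
    ∑' p, g (m + p) = ∑' q, (if m ≤ q then g q else 0) := by
  have hinj : Function.Injective (fun p : ℕ => m + p) := fun p q h => by
    simpa using h
  have hsupp : (Function.support fun q => if m ≤ q then g q else 0)
      ⊆ Set.range (fun p : ℕ => m + p) := by
    intro q hq
    simp only [Function.mem_support] at hq
    by_cases h : m ≤ q
    · exact ⟨q - m, by simp; omega⟩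
    · simp [h] at hq
  have := hinj.tsum_eq hsupp
  simp only [Nat.le_add_right, if_true] at this
  exact this

lemma tsum_ite_le (q : ℕ) (C : ENNReal) :
    ∑' m, (if m ≤ q then C else 0) = ((q : ENNReal) + 1) * C := by
  have hzero : ∀ m ∉ Finset.range (q + 1), (if m ≤ q then C else 0) = 0 := by
    intro m hm
    rw [if_neg]
    intro h
    exact hm (Finset.mem_range.2 (by omega))
  rw [tsum_eq_sum hzero]
  have hpos : ∀ m ∈ Finset.range (q + 1), (if m ≤ q then C else 0) = C := by
    intro m hm
    rw [if_pos (by simpa [Nat.lt_succ_iff] using hm)]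
  rw [Finset.sum_congr rfl hpos, Finset.sum_const, Finset.card_range, nsmul_eq_mul]
  push_cast
  ring_nf

lemma double_shift_tsum (g : ℕ → ENNReal) (n : ℕ) :
    ∑' m, ∑' p, g (n + m + p) = ∑' (q : ℕ), ((q : ENNReal) + 1) * g (n + q) := by
  have h1 : ∀ m : ℕ, ∑' p, g (n + m + p) = ∑' q, (if m ≤ q then g (n + q) else 0) := by
    intro m
    have := tsum_shift (fun q => g (n + q)) m
    simp only [← add_assoc] at this
    exact this
  simp_rw [h1]
  rw [ENNReal.tsum_comm]
  exact tsum_congr fun q => tsum_ite_le q (g (n + q))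

/-! ### From a moment representation to positive definiteness -/

lemma isPDSeq_of_moments (γ : ℕ → ℝ) (L : ℝ) (hL : 0 ≤ L) (μ : Measure ℝ)
    (hint : ∀ n : ℕ, Integrable (fun x => x ^ n) μ)
    (hmom : ∀ n : ℕ, γ n = L + ∫ x, x ^ n ∂μ) : IsPDSeq γ := by
  intro k l
  set R := Finset.range (k+1) with hR
  set F : ℝ → ℂ := fun x => ∑ i ∈ R, l i * (x:ℂ) ^ i with hF
  have hpowC : ∀ p : ℕ, (fun x : ℝ => (x:ℂ) ^ p) = fun x : ℝ => ((x ^ p : ℝ) : ℂ) := by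
    intro p; funext x; push_cast; ring
  have hintC : ∀ i j : ℕ,
      Integrable (fun x : ℝ => (x:ℂ) ^ (i+j) * (l i * (starRingEnd ℂ) (l j))) μ := by
    intro i j
    have h1 : Integrable (fun x : ℝ => ((x ^ (i+j) : ℝ) : ℂ)) μ := (hint (i+j)).ofReal
    rw [show (fun x : ℝ => (x:ℂ) ^ (i+j) * (l i * (starRingEnd ℂ) (l j)))
        = fun x : ℝ => ((x ^ (i+j) : ℝ) : ℂ) * (l i * (starRingEnd ℂ) (l j)) by
      funext x; push_cast; ring]
    exact h1.mul_const _
  have hterm : ∀ i j : ℕ, ((γ (i+j) : ℂ)) * l i * (starRingEnd ℂ) (l j)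
      = (L:ℂ) * (l i * (starRingEnd ℂ) (l j))
        + ∫ x, (x:ℂ)^(i+j) * (l i * (starRingEnd ℂ) (l j)) ∂μ := by
    intro i j
    have hIC : (∫ x : ℝ, ((x ^ (i+j) : ℝ) : ℂ) ∂μ) = ((∫ x : ℝ, x ^ (i+j) ∂μ : ℝ) : ℂ) :=
      integral_ofReal
    rw [integral_mul_const, hpowC (i+j), hIC, hmom (i+j)]
    push_cast
    ring
  calc ∑ i ∈ R, ∑ j ∈ R, (γ (i + j) : ℂ) * l i * (starRingEnd ℂ) (l j)
      = ∑ i ∈ R, ∑ j ∈ R, ((L:ℂ) * (l i * (starRingEnd ℂ) (l j))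
          + ∫ x, (x:ℂ)^(i+j) * (l i * (starRingEnd ℂ) (l j)) ∂μ) := by
        refine Finset.sum_congr rfl fun i _ => Finset.sum_congr rfl fun j _ => hterm i j
    _ = (∑ i ∈ R, ∑ j ∈ R, (L:ℂ) * (l i * (starRingEnd ℂ) (l j)))
        + ∑ i ∈ R, ∑ j ∈ R, ∫ x, (x:ℂ)^(i+j) * (l i * (starRingEnd ℂ) (l j)) ∂μ := by
        rw [← Finset.sum_add_distrib]
        refine Finset.sum_congr rfl fun i _ => Finset.sum_add_distrib
    _ = ((L * Complex.normSq (∑ i ∈ R, l i)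
          + ∫ x, Complex.normSq (F x) ∂μ : ℝ) : ℂ) := by
        have e1 : ∑ i ∈ R, ∑ j ∈ R, (L:ℂ) * (l i * (starRingEnd ℂ) (l j))
            = (L:ℂ) * ((∑ i ∈ R, l i) * (starRingEnd ℂ) (∑ i ∈ R, l i)) := by
          rw [map_sum, Finset.sum_mul_sum, Finset.mul_sum]
          refine Finset.sum_congr rfl fun i _ => ?_
          rw [Finset.mul_sum]
        have e2 : ∑ i ∈ R, ∑ j ∈ R, ∫ x, (x:ℂ)^(i+j) * (l i * (starRingEnd ℂ) (l j)) ∂μ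
            = ∫ x, F x * (starRingEnd ℂ) (F x) ∂μ := by
          have step1 : ∀ i : ℕ, ∑ j ∈ R, ∫ x, (x:ℂ)^(i+j) * (l i * (starRingEnd ℂ) (l j)) ∂μ
              = ∫ x, ∑ j ∈ R, (x:ℂ)^(i+j) * (l i * (starRingEnd ℂ) (l j)) ∂μ := fun i =>
            (integral_finset_sum R (fun j _ => hintC i j)).symm
          simp_rw [step1]
          rw [← integral_finset_sum R (fun i _ => integrable_finset_sum R (fun j _ => hintC i j))]
          congr 1
          funext x
          rw [hF, map_sum, Finset.sum_mul_sum]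
          refine Finset.sum_congr rfl fun i _ => Finset.sum_congr rfl fun j _ => ?_
          simp only [map_mul, ← Complex.ofReal_pow, Complex.conj_ofReal]
          push_cast
          ring
        rw [e1, e2]
        have hIC2 : (∫ x : ℝ, ((Complex.normSq (F x) : ℝ) : ℂ) ∂μ)
            = ((∫ x : ℝ, Complex.normSq (F x) ∂μ : ℝ) : ℂ) := integral_ofReal
        simp_rw [Complex.mul_conj]
        rw [hIC2]
        push_cast
        ring
    _ ≥ 0 := by
        rw [ge_iff_le, Complex.zero_le_real]
        exact add_nonneg (mul_nonneg hL (Complex.normSq_nonneg _))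
          (integral_nonneg fun x => Complex.normSq_nonneg _)

/-! ### Construction of the moment representation -/

lemma moment_rep {ν : Measure ℝ}
    (hae : ∀ᵐ x ∂ν, 0 ≤ x)
    (a : ℕ → ℝ) (ha : ∀ p, a p = ∫ x, x ^ p ∂ν)
    (haint : ∀ p, Integrable (fun x : ℝ => x ^ p) ν)
    (d : ℕ → ℝ) (hd : ∀ n, d (n + 1) = d n + a n) (hd0 : Tendsto d atTop (𝓝 0))
    (r : ℕ → ℝ) (hr : ∀ n, r (n + 1) = r n + d n) (hrlim : Tendsto r atTop (𝓝 0)) :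
    ∃ μ : Measure ℝ, (∀ᵐ x ∂μ, 0 ≤ x) ∧ (∀ n, Integrable (fun x : ℝ => x ^ n) μ) ∧
      ∀ n, r n = ∫ x, x ^ n ∂μ := by
  have hann : ∀ p, 0 ≤ a p := by
    intro p
    rw [ha p]
    exact integral_nonneg_of_ae (hae.mono fun x hx => pow_nonneg hx p)
  have hdmono : Monotone d := monotone_nat_of_le_succ fun n => by
    rw [hd n]; linarith [hann n]
  have hdnp : ∀ n, d n ≤ 0 := fun n =>
    ge_of_tendsto hd0 (eventually_atTop.2 ⟨n, fun m hm => hdmono hm⟩)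
  have hpart1 : ∀ m P, ∑ p ∈ Finset.range P, a (m + p) = d (m + P) - d m := by
    intro m P
    induction P with
    | zero => simp
    | succ P ih =>
        have e : m + (P + 1) = m + P + 1 := rfl
        rw [Finset.sum_range_succ, ih, e, hd (m + P)]; ring
  have hsum1 : ∀ m, HasSum (fun p => a (m + p)) (-(d m)) := by
    intro m
    rw [hasSum_iff_tendsto_nat_of_nonneg (fun p => hann (m + p))]
    simp_rw [hpart1]
    have : Tendsto (fun P : ℕ => d (m + P)) atTop (𝓝 0) := by
      have := hd0.comp (tendsto_add_atTop_nat m)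
      simpa [Nat.add_comm, Function.comp_def] using this
    simpa using this.sub_const (d m)
  have hpart2 : ∀ n M, ∑ m ∈ Finset.range M, (-(d (n + m))) = r n - r (n + M) := by
    intro n M
    induction M with
    | zero => simp
    | succ M ih =>
        have e : n + (M + 1) = n + M + 1 := rfl
        rw [Finset.sum_range_succ, ih, e, hr (n + M)]; ring
  have hsum2 : ∀ n, HasSum (fun m => -(d (n + m))) (r n) := by
    intro n
    rw [hasSum_iff_tendsto_nat_of_nonneg (fun m => by linarith [hdnp (n + m)])]
    simp_rw [hpart2]
    have : Tendsto (fun M : ℕ => r (n + M)) atTop (𝓝 0) := by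
      have := hrlim.comp (tendsto_add_atTop_nat n)
      simpa [Nat.add_comm, Function.comp_def] using this
    simpa using (tendsto_const_nhds (x := r n)).sub this
  have hrnn : ∀ n, 0 ≤ r n := fun n =>
    hasSum_le (fun m => by linarith [hdnp (n + m)]) hasSum_zero (hsum2 n)
  set A : ℕ → ENNReal := fun p => ENNReal.ofReal (a p) with hA
  have hE1 : ∀ m, ∑' p, A (m + p) = ENNReal.ofReal (-(d m)) := by
    intro m
    rw [← (hsum1 m).tsum_eq, ENNReal.ofReal_tsum_of_nonneg (fun p => hann (m + p))
      (hsum1 m).summable]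
  have hE2 : ∀ n, ∑' m, ENNReal.ofReal (-(d (n + m))) = ENNReal.ofReal (r n) := by
    intro n
    rw [← (hsum2 n).tsum_eq, ENNReal.ofReal_tsum_of_nonneg
      (fun m => by linarith [hdnp (n + m)]) (hsum2 n).summable]
  have hkey0 : ∀ n, ∑' (q : ℕ), ((q : ENNReal) + 1) * A (n + q) = ENNReal.ofReal (r n) := by
    intro n
    rw [← double_shift_tsum A n]
    rw [← hE2 n]
    exact tsum_congr fun m => by rw [← hE1 (n + m)]
  have hlinta : ∀ p, ∫⁻ x, ENNReal.ofReal (x ^ p) ∂ν = A p := by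
    intro p
    show _ = ENNReal.ofReal (a p)
    rw [ha p, ← ofReal_integral_eq_lintegral_ofReal (haint p)
      (hae.mono fun x hx => pow_nonneg hx p)]
  set W : ℝ → ENNReal := fun x => ∑' (q : ℕ), ((q : ENNReal) + 1) * ENNReal.ofReal (x ^ q)
    with hW
  have hWmeas : Measurable W :=
    Measurable.ennreal_tsum fun q => ((measurable_id'.pow_const q).ennreal_ofReal).const_mul _
  set μ : Measure ℝ := ν.withDensity W with hμ
  have haeμ : ∀ᵐ x ∂μ, 0 ≤ x := (withDensity_absolutelyContinuous ν W).ae_le hae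
  have hkey : ∀ n, ∫⁻ x, ENNReal.ofReal (x ^ n) ∂μ = ENNReal.ofReal (r n) := by
    intro n
    rw [hμ, lintegral_withDensity_eq_lintegral_mul ν hWmeas
      ((measurable_id'.pow_const n).ennreal_ofReal)]
    have hptwise : ∀ᵐ x ∂ν, (W * fun x => ENNReal.ofReal (x ^ n)) x
        = ∑' (q : ℕ), ((q : ENNReal) + 1) * ENNReal.ofReal (x ^ (n + q)) := by
      filter_upwards [hae] with x hx
      simp only [Pi.mul_apply, hW]
      rw [← ENNReal.tsum_mul_right]
      refine tsum_congr fun q => ?_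
      rw [mul_assoc, ← ENNReal.ofReal_mul (pow_nonneg hx q), ← pow_add]
      ring_nf
    rw [lintegral_congr_ae hptwise, lintegral_tsum fun q =>
      (((measurable_id'.pow_const (n + q)).ennreal_ofReal).const_mul _).aemeasurable]
    calc ∑' (q : ℕ), ∫⁻ x, ((q : ENNReal) + 1) * ENNReal.ofReal (x ^ (n + q)) ∂ν
        = ∑' (q : ℕ), ((q : ENNReal) + 1) * A (n + q) := by
          refine tsum_congr fun q => ?_
          rw [lintegral_const_mul _ ((measurable_id'.pow_const (n + q)).ennreal_ofReal),
            hlinta (n + q)]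
      _ = ENNReal.ofReal (r n) := hkey0 n
  have hintμ : ∀ n, Integrable (fun x : ℝ => x ^ n) μ := by
    intro n
    refine ⟨(continuous_pow n).aestronglyMeasurable, ?_⟩
    rw [hasFiniteIntegral_iff_ofReal (haeμ.mono fun x hx => pow_nonneg hx n)]
    rw [hkey n]
    exact ENNReal.ofReal_lt_top
  refine ⟨μ, haeμ, hintμ, fun n => ?_⟩
  rw [integral_eq_lintegral_of_nonneg_ae (haeμ.mono fun x hx => pow_nonneg hx n)
    (continuous_pow n).aestronglyMeasurable, hkey n, ENNReal.toReal_ofReal (hrnn n)]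

end CPDAux

/-- Corollary `pd2cpd`: let `γ` be a CPD sequence of at most exponential growth with
representing triplet `(b, c, ν)` such that `supp ν ⊆ [0, ∞)` and `γ_n ≥ 0` for all large `n`.
Then the following are equivalent: (i) `(Δγ)_n → 0`; (ii) `γ` is monotonically decreasing;
(iii) `γ` converges in `ℝ`.  Moreover, if (i) holds, then `γ` is PD and `γ_n ≥ 0` for all
`n`. -/
theorem convergent_cpd_is_pd (γ : ℕ → ℝ) (hcpd : IsCPDSeq γ) (hg : FiniteExpGrowth γ)
    (b c : ℝ) (ν : Measure ℝ) (hrep : IsRepTriplet γ b c ν)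
    (hsupp : measSupport ν ⊆ Set.Ici 0) (hpos : ∃ N : ℕ, ∀ n : ℕ, N ≤ n → 0 ≤ γ n) :
    ((Tendsto (deltaSeq γ) atTop (𝓝 0) ↔ Antitone γ) ∧
     (Antitone γ ↔ ∃ L : ℝ, Tendsto γ atTop (𝓝 L))) ∧
    (Tendsto (deltaSeq γ) atTop (𝓝 0) → IsPDSeq γ ∧ ∀ n : ℕ, 0 ≤ γ n) := by
  obtain ⟨hc, hfin, ⟨K, hK, hK0⟩, hν1, hrepf⟩ := hrep
  haveI := hfin
  have hae0 : ∀ᵐ x ∂ν, 0 ≤ x := CPDAux.ae_nonneg_of_support hsupp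
  have hQI : ∀ n, Integrable (fun x => Qpoly n x) ν := fun n =>
    CPDAux.integrable_of_cont hK hK0 (CPDAux.continuous_Qpoly n)
  have hGI : ∀ n, Integrable (CPDAux.geom n) ν := fun n =>
    CPDAux.integrable_of_cont hK hK0 (CPDAux.continuous_geom n)
  have hPI : ∀ p : ℕ, Integrable (fun x : ℝ => x ^ p) ν := fun p =>
    CPDAux.integrable_of_cont hK hK0 (continuous_pow p)
  have hdelta : ∀ n : ℕ, deltaSeq γ n = b + c * (2 * n + 1) + ∫ x, CPDAux.geom n x ∂ν := by
    intro n
    have hsub : ∫ x, CPDAux.geom n x ∂ν = (∫ x, Qpoly (n+1) x ∂ν) - ∫ x, Qpoly n x ∂ν := by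
      rw [← integral_sub (hQI (n+1)) (hQI n)]
      exact integral_congr_ae (Filter.Eventually.of_forall fun x =>
        (CPDAux.Qpoly_succ_sub n x).symm)
    show γ (n+1) - γ n = _
    rw [hrepf (n+1), hrepf n]
    push_cast
    rw [hsub]
    ring
  have hsec : ∀ n : ℕ, deltaSeq γ (n+1) = deltaSeq γ n + (2 * c + ∫ x, x ^ n ∂ν) := by
    intro n
    have hsub : ∫ x, CPDAux.geom (n+1) x ∂ν = (∫ x, CPDAux.geom n x ∂ν) + ∫ x, x ^ n ∂ν := by
      rw [← integral_add (hGI n) (hPI n)]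
      refine integral_congr_ae (Filter.Eventually.of_forall fun x => ?_)
      have := CPDAux.geom_succ_sub n x
      show CPDAux.geom (n+1) x = CPDAux.geom n x + x ^ n
      linarith
    rw [hdelta (n+1), hdelta n, hsub]
    push_cast
    ring
  have hInn : ∀ n : ℕ, 0 ≤ ∫ x, x ^ n ∂ν := fun n =>
    integral_nonneg_of_ae (hae0.mono fun x hx => pow_nonneg hx n)
  have hmono : Monotone (deltaSeq γ) := monotone_nat_of_le_succ fun n => by
    have := hInn n
    rw [hsec n]
    linarith
  have h12 : Tendsto (deltaSeq γ) atTop (𝓝 0) → Antitone γ := by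
    intro h
    refine antitone_nat_of_succ_le fun n => ?_
    have h1 : deltaSeq γ n ≤ 0 :=
      ge_of_tendsto h (eventually_atTop.2 ⟨n, fun m hm => hmono hm⟩)
    have h2 : γ (n+1) - γ n ≤ 0 := h1
    linarith
  obtain ⟨N, hN⟩ := hpos
  have hnn : Antitone γ → ∀ n, 0 ≤ γ n := by
    intro hA n
    calc (0:ℝ) ≤ γ (max n N) := hN _ (le_max_right n N)
    _ ≤ γ n := hA (le_max_left n N)
  have h23 : Antitone γ → ∃ L, Tendsto γ atTop (𝓝 L) := by
    intro hA
    refine ⟨_, tendsto_atTop_ciInf hA ⟨0, ?_⟩⟩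
    rintro x ⟨n, rfl⟩
    exact hnn hA n
  have h31 : (∃ L, Tendsto γ atTop (𝓝 L)) → Tendsto (deltaSeq γ) atTop (𝓝 0) := by
    rintro ⟨L, hL⟩
    have h1 : Tendsto (fun n : ℕ => γ (n+1)) atTop (𝓝 L) :=
      hL.comp (tendsto_add_atTop_nat 1)
    have h2 := h1.sub hL
    show Tendsto (fun n => γ (n+1) - γ n) atTop (𝓝 0)
    simpa [deltaSeq] using h2
  refine ⟨⟨⟨h12, fun hA => h31 (h23 hA)⟩, ⟨h23, fun hL => h12 (h31 hL)⟩⟩, ?_⟩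
  intro h1
  have hA := h12 h1
  have hγnn := hnn hA
  refine ⟨?_, hγnn⟩
  obtain ⟨L, hL⟩ := h23 hA
  have hLnn : 0 ≤ L := ge_of_tendsto' hL hγnn
  -- show `c = 0`
  have hlow : ∀ n : ℕ, b + c + (2 * c) * n ≤ deltaSeq γ n := by
    intro n
    have hg0 : 0 ≤ ∫ x, CPDAux.geom n x ∂ν :=
      integral_nonneg_of_ae (hae0.mono fun x hx => CPDAux.geom_nonneg hx n)
    rw [hdelta n]
    nlinarith
  have hc0 : c = 0 := by
    rcases eq_or_lt_of_le hc with h | h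
    · exact h.symm
    · exfalso
      have htop : Tendsto (fun n : ℕ => b + c + (2 * c) * n) atTop atTop := by
        apply tendsto_atTop_add_const_left
        exact tendsto_natCast_atTop_atTop.const_mul_atTop (by linarith)
      exact not_tendsto_atTop_of_tendsto_nhds h1 (tendsto_atTop_mono hlow htop)
  -- apply the moment representation
  have hd : ∀ n : ℕ, deltaSeq γ (n + 1) = deltaSeq γ n + ∫ x, x ^ n ∂ν := by
    intro n
    rw [hsec n, hc0]
    ring
  have hr : ∀ n : ℕ, γ (n + 1) - L = (γ n - L) + deltaSeq γ n := by
    intro n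
    show _ = _ + (γ (n+1) - γ n)
    ring
  have hrlim : Tendsto (fun n => γ n - L) atTop (𝓝 0) := by
    have := hL.sub_const L
    simpa using this
  obtain ⟨μ, haeμ, hintμ, hmomμ⟩ := CPDAux.moment_rep hae0 (fun p => ∫ x, x ^ p ∂ν)
    (fun p => rfl) hPI (deltaSeq γ) hd h1 (fun n => γ n - L) hr hrlim
  exact CPDAux.isPDSeq_of_moments γ L hLnn μ hintμ fun n => by
    have := hmomμ n
    linarith

end
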